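/- Let φ : [1]^{m+2} → [1]² be a surjective interval-preserving monotone function. Then, after composing with a coordinate permutation of the domain, φ decomposes as a product φ₁ × φ₂ of two surjective monotone functions φ_i : [1]^{m_i} → [1] with m₁ + m₂ = m + 2. In particular, for distinct output coordinates i ≠ j of any surjective interval-preserving monotone φ : [1]^m → [1]^n, the sets of input coordinates on which the i-th and j-th components of φ depend are disjoint. -/

import Mathlib

/-- A function between preorders is interval-preserving if the image of every
(nonempty) interval is an interval. -/
def IsIntervalPreserving {α β : Type*} [Preorder α] [Preorder β] (f : α → β) : Prop :=
  ∀ p q : α, p ≤ q → ∃ a b : β, f '' Set.Icc p q = Set.Icc a b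

/-- The `i`-th component of `φ` depends on input coordinate `s`. -/
def BoolDependsOn {m n : ℕ} (φ : (Fin m → Bool) → (Fin n → Bool)) (i : Fin n) (s : Fin m) :
    Prop :=
  ∃ x y : Fin m → Bool, (∀ t, t ≠ s → x t = y t) ∧ φ x i ≠ φ y i

namespace Stmt18

lemma bool_lt : ∀ {a b : Bool}, a ≤ b → a ≠ b → a = false ∧ b = true := by decide

lemma fin2 (k : Fin 2) : k = 0 ∨ k = 1 := by revert k; decide

variable {M : ℕ}

/-- flip coordinate `s` to `true` -/
def up (s : Fin M) (x : Fin M → Bool) : Fin M → Bool := Function.update x s true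

lemma le_up (s : Fin M) (x : Fin M → Bool) : x ≤ up s x := by
  intro t
  by_cases h : t = s
  · subst h; simp [up]
  · simp [up, Function.update_of_ne h]

lemma up_apply_ne (s : Fin M) (x : Fin M → Bool) {t : Fin M} (h : t ≠ s) :
    up s x t = x t := Function.update_of_ne h _ _

lemma up_apply_self (s : Fin M) (x : Fin M → Bool) : up s x s = true :=
  Function.update_self _ _ _

lemma up_mono (s : Fin M) {x y : Fin M → Bool} (h : x ≤ y) : up s x ≤ up s y := by
  intro t
  by_cases ht : t = s
  · subst ht; simp [up]
  · simpa [up_apply_ne s _ ht] using h t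

lemma le_of_between_false {s : Fin M} {y u : Fin M → Bool} (hu : u ≤ up s y)
    (hus : u s = false) : u ≤ y := by
  intro t
  by_cases ht : t = s
  · subst ht; simp [hus]
  · simpa [up_apply_ne s _ ht] using hu t

lemma up_le_of_between_true {s : Fin M} {x u : Fin M → Bool} (hu : x ≤ u)
    (hus : u s = true) : up s x ≤ u := by
  intro t
  by_cases ht : t = s
  · subst ht; simp [up, hus]
  · simpa [up_apply_ne s _ ht] using hu t

lemma K_of_IP {α β : Type*} [Preorder α] [PartialOrder β] (φ : α → β)
    (h : IsIntervalPreserving φ) :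
    ∀ p q : α, p ≤ q → ∀ z, φ p ≤ z → z ≤ φ q → ∃ w, p ≤ w ∧ w ≤ q ∧ φ w = z := by
  intro p q hpq z h1 h2
  obtain ⟨a, b, hab⟩ := h p q hpq
  have hp : φ p ∈ Set.Icc a b := hab ▸ ⟨p, ⟨le_refl p, hpq⟩, rfl⟩
  have hq : φ q ∈ Set.Icc a b := hab ▸ ⟨q, ⟨hpq, le_refl q⟩, rfl⟩
  have hz : z ∈ Set.Icc a b := ⟨le_trans hp.1 h1, le_trans h2 hq.2⟩
  rw [← hab] at hz
  obtain ⟨w, hw, hwz⟩ := hz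
  exact ⟨w, hw.1, hw.2, hwz⟩


lemma between_up {s : Fin M} {x u : Fin M → Bool} (hx : x s = false)
    (h1 : x ≤ u) (h2 : u ≤ up s x) : u = x ∨ u = up s x := by
  cases hus : u s
  · left
    funext t
    by_cases ht : t = s
    · subst ht; rw [hus, hx]
    · exact le_antisymm (by simpa [up_apply_ne s x ht] using h2 t) (h1 t)
  · right
    funext t
    by_cases ht : t = s
    · subst ht; rw [hus, up_apply_self]
    · exact le_antisymm (h2 t) (by simpa [up_apply_ne s x ht] using h1 t)

lemma fin2_ne {i j k : Fin 2} (hij : i ≠ j) (hk : k ≠ i) : k = j := by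
  revert hij hk; revert i j k; decide

section Core

variable (φ : (Fin M → Bool) → (Fin 2 → Bool))

/-- At most one output coordinate can flip when the input coordinate `s` flips. -/
lemma L2 (hm : Monotone φ)
    (hK : ∀ p q : Fin M → Bool, p ≤ q → ∀ z, φ p ≤ z → z ≤ φ q →
      ∃ w, p ≤ w ∧ w ≤ q ∧ φ w = z)
    (s : Fin M) (i j : Fin 2) (hij : i ≠ j) (x : Fin M → Bool) (hx : x s = false)
    (hdi : φ x i ≠ φ (up s x) i) : φ (up s x) j = φ x j := by
  by_contra hdj
  have hφ : φ x ≤ φ (up s x) := hm (le_up s x)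
  obtain ⟨hxi, hui⟩ := bool_lt (hφ i) hdi
  obtain ⟨hxj, huj⟩ := bool_lt (hφ j) (fun h => hdj h.symm)
  set z : Fin 2 → Bool := fun k => if k = i then true else false with hz
  have h1 : φ x ≤ z := by
    intro k
    by_cases hk : k = i
    · simp [hz, hk]
    · have := fin2_ne hij hk; subst this; simp [hz, hk, hxj]
  have h2 : z ≤ φ (up s x) := by
    intro k
    by_cases hk : k = i
    · subst hk; simp [hz, hui]
    · simp [hz, hk]
  obtain ⟨w, hw1, hw2, hwz⟩ := hK x (up s x) (le_up s x) z h1 h2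
  rcases between_up hx hw1 hw2 with h | h <;> subst h
  · rw [hwz] at hxi; simp [hz] at hxi
  · rw [hwz] at huj
    have hji : ¬ j = i := fun h => hij h.symm
    simp [hz, hji] at huj

/-- Comparable points cannot have different flip coordinates. -/
lemma L3 (hm : Monotone φ)
    (hK : ∀ p q : Fin M → Bool, p ≤ q → ∀ z, φ p ≤ z → z ≤ φ q →
      ∃ w, p ≤ w ∧ w ≤ q ∧ φ w = z)
    (s : Fin M) (i j : Fin 2) (hij : i ≠ j) (x y : Fin M → Bool) (hxy : x ≤ y)
    (hx : x s = false) (hy : y s = false)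
    (hEx : φ x i ≠ φ (up s x) i) (hEy : φ y j ≠ φ (up s y) j) : False := by
  obtain ⟨hxi, hui⟩ := bool_lt ((hm (le_up s x)) i) hEx
  obtain ⟨hyj, hvj⟩ := bool_lt ((hm (le_up s y)) j) hEy
  set z : Fin 2 → Bool := fun k => if k = i then false else true with hz
  have h1 : φ x ≤ z := by
    intro k
    by_cases hk : k = i
    · subst hk; simp [hz, hxi]
    · simp [hz, hk]
  have h2 : z ≤ φ (up s y) := by
    intro k
    by_cases hk : k = i
    · simp [hz, hk]
    · have := fin2_ne hij hk; subst this; simp [hz, hk, hvj]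
  obtain ⟨w, hw1, hw2, hwz⟩ := hK x (up s y) (hxy.trans (le_up s y)) z h1 h2
  cases hws : w s
  · have hwy : w ≤ y := le_of_between_false hw2 hws
    have := (hm hwy) j
    rw [hwz, hyj] at this
    have hji : ¬ j = i := fun h => hij h.symm
    simp [hz, hji] at this
    exact absurd this (by simp)
  · have := (hm (up_le_of_between_true hw1 hws)) i
    rw [hwz, hui] at this
    simp [hz] at this
    exact absurd this (by simp)


lemma bool_true_le : ∀ {a b : Bool}, a ≤ b → a = true → b = true := by decide
lemma bool_le_false : ∀ {a b : Bool}, a ≤ b → b = false → a = false := by decide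

/-- Hamming distance. -/
def ds (x y : Fin M → Bool) : ℕ := (Finset.univ.filter fun t => x t ≠ y t).card

lemma ds_eq_zero {x y : Fin M → Bool} (h : ds x y = 0) : x = y := by
  funext t
  by_contra ht
  have : t ∈ Finset.univ.filter fun t => x t ≠ y t := by simp [ht]
  rw [Finset.card_eq_zero.1 h] at this
  exact absurd this (Finset.notMem_empty t)

lemma mem_ds {x y : Fin M → Bool} {t : Fin M} :
    t ∈ (Finset.univ.filter fun t => x t ≠ y t) ↔ x t ≠ y t := by simp

lemma ds_lt_up {p u w : Fin M → Bool} (h1 : p ≤ u) (h2 : u ≤ w) (hne : u ≠ w) :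
    ds p u < ds p w := by
  apply Finset.card_lt_card
  rw [Finset.ssubset_iff_of_subset]
  · obtain ⟨t, ht⟩ := Function.ne_iff.1 hne
    obtain ⟨hu, hw⟩ := bool_lt (h2 t) ht
    have hp : p t = false := bool_le_false (h1 t) hu
    exact ⟨t, mem_ds.2 (by rw [hp, hw]; decide), fun hmem => (mem_ds.1 hmem) (hp.trans hu.symm)⟩
  · intro t ht
    have ht' := mem_ds.1 ht
    obtain ⟨hp, hu⟩ := bool_lt (h1 t) ht'
    exact mem_ds.2 (by rw [hp, bool_true_le (h2 t) hu]; decide)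

lemma ds_lt_down {w u p : Fin M → Bool} (h1 : w ≤ u) (h2 : u ≤ p) (hne : u ≠ w) :
    ds u p < ds w p := by
  apply Finset.card_lt_card
  rw [Finset.ssubset_iff_of_subset]
  · obtain ⟨t, ht⟩ := Function.ne_iff.1 hne
    obtain ⟨hw, hu⟩ := bool_lt (h1 t) (fun h => ht h.symm)
    have hp : p t = true := bool_true_le (h2 t) hu
    exact ⟨t, mem_ds.2 (by rw [hp, hw]; decide), fun hmem => (mem_ds.1 hmem) (hu.trans hp.symm)⟩
  · intro t ht
    have ht' := mem_ds.1 ht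
    obtain ⟨hu, hp⟩ := bool_lt (h2 t) ht'
    exact mem_ds.2 (by rw [hp, bool_le_false (h1 t) hu]; decide)

lemma ds_lt_main_up {p q w : Fin M → Bool} (h1 : p ≤ w)
    (h2 : ∀ t, w t ≤ (p t || q t)) (hne : w ≠ p) : ds w q < ds p q := by
  apply Finset.card_lt_card
  rw [Finset.ssubset_iff_of_subset]
  · obtain ⟨t, ht⟩ := Function.ne_iff.1 hne
    obtain ⟨hp, hw⟩ := bool_lt (h1 t) (fun h => ht h.symm)
    have hq : q t = true := by
      have := h2 t; rw [hw, hp] at this; revert this; cases q t <;> decide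
    exact ⟨t, mem_ds.2 (by rw [hp, hq]; decide),
      fun hmem => (mem_ds.1 hmem) (hw.trans hq.symm)⟩
  · intro t ht
    have ht' := mem_ds.1 ht
    apply mem_ds.2
    intro hpq
    by_cases hpw : p t = w t
    · exact ht' (hpw ▸ hpq)
    · obtain ⟨hp, hw⟩ := bool_lt (h1 t) hpw
      have hq : q t = true := by
        have := h2 t; rw [hw, hp] at this; revert this; cases q t <;> decide
      exact ht' (hw.trans hq.symm)

lemma ds_lt_main_down {p q w : Fin M → Bool} (h1 : w ≤ p)
    (h2 : ∀ t, (p t && q t) ≤ w t) (hne : w ≠ p) : ds w q < ds p q := by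
  apply Finset.card_lt_card
  rw [Finset.ssubset_iff_of_subset]
  · obtain ⟨t, ht⟩ := Function.ne_iff.1 hne
    obtain ⟨hw, hp⟩ := bool_lt (h1 t) ht
    have hq : q t = false := by
      have := h2 t; rw [hw, hp] at this; revert this; cases q t <;> decide
    exact ⟨t, mem_ds.2 (by rw [hp, hq]; decide),
      fun hmem => (mem_ds.1 hmem) (hw.trans hq.symm)⟩
  · intro t ht
    have ht' := mem_ds.1 ht
    apply mem_ds.2
    intro hpq
    by_cases hpw : p t = w t
    · exact ht' (hpw ▸ hpq)
    · obtain ⟨hw, hp⟩ := bool_lt (h1 t) (fun h => hpw h.symm)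
      have hq : q t = false := by
        have := h2 t; rw [hw, hp] at this; revert this; cases q t <;> decide
      exact ht' (hw.trans hq.symm)


/-- Core disjointness: coordinates 0 and 1 of a monotone interval-preserving map to `Bool²`
cannot both flip when input coordinate `s` flips. -/
theorem core (hm : Monotone φ)
    (hK : ∀ p q : Fin M → Bool, p ≤ q → ∀ z, φ p ≤ z → z ≤ φ q →
      ∃ w, p ≤ w ∧ w ≤ q ∧ φ w = z)
    (s : Fin M) :
    ∀ d : ℕ, ∀ p q : Fin M → Bool, ds p q ≤ d → p s = false → q s = false →
      φ p 0 ≠ φ (up s p) 0 → φ q 1 ≠ φ (up s q) 1 → False := by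
  intro d
  induction d with
  | zero =>
    intro p q hd hp hq hE0 hE1
    have hpq : p = q := ds_eq_zero (Nat.le_zero.1 hd)
    subst hpq
    exact hE1 (L2 φ hm hK s 0 1 (by decide) p hp hE0).symm
  | succ n IH =>
    intro p q hd hp hq hE0 hE1
    by_cases hle : ds p q ≤ n
    · exact IH p q hle hp hq hE0 hE1
    by_cases hpq : p ≤ q
    · exact L3 φ hm hK s 0 1 (by decide) p q hpq hp hq hE0 hE1
    by_cases hqp : q ≤ p
    · exact L3 φ hm hK s 1 0 (by decide) q p hqp hq hp hE1 hE0
    set b : Fin M → Bool := fun t => p t || q t with hbdef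
    have hpb : p ≤ b := fun t => by cases hh : p t <;> simp [hbdef, hh]
    have hqb : q ≤ b := fun t => by cases hh : q t <;> simp [hbdef, hh]
    have hbs : b s = false := by simp [hbdef, hp, hq]
    obtain ⟨hp0, hup0⟩ := bool_lt ((hm (le_up s p)) 0) hE0
    obtain ⟨hq1, huq1⟩ := bool_lt ((hm (le_up s q)) 1) hE1
    have hL2p : φ (up s p) 1 = φ p 1 := L2 φ hm hK s 0 1 (by decide) p hp hE0
    have hL2q : φ (up s q) 0 = φ q 0 := L2 φ hm hK s 1 0 (by decide) q hq hE1
    -- flipping s is trivial strictly above p (below b)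
    have etriv_up : ∀ w, p ≤ w → w ≤ b → w ≠ p → φ (up s w) = φ w := by
      intro w h1 h2 h3
      have hwsf : w s = false := bool_le_false (h2 s) hbs
      by_contra hne
      obtain ⟨k, hk⟩ := Function.ne_iff.1 hne
      rcases fin2 k with hk0 | hk0 <;> subst hk0
      · have hE0w : φ w 0 ≠ φ (up s w) 0 := fun h => hk h.symm
        have hlt : ds w q < ds p q := ds_lt_main_up h1 (fun t => h2 t) h3
        exact IH w q (by omega) hwsf hq hE0w hE1
      · exact L3 φ hm hK s 0 1 (by decide) p w h1 hp hwsf hE0 (fun h => hk h.symm)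
    have hupdate : Function.update (φ p) 0 true = φ (up s p) := by
      funext k
      rcases fin2 k with hk | hk <;> subst hk
      · simp [hup0]
      · rw [Function.update_of_ne (by decide)]
        exact hL2p.symm
    -- the up chain: everything strictly between p and b has value (φ p) + e₀
    have upchain : ∀ nn : ℕ, ∀ w, p ≤ w → w ≤ b → ds p w ≤ nn → w ≠ p →
        φ w = Function.update (φ p) 0 true := by
      intro nn
      induction nn with
      | zero =>
        intro w h1 h2 hds hne
        exact absurd (ds_eq_zero (Nat.le_zero.1 hds)).symm hne
      | succ kk IHk =>
        intro w h1 h2 hds hne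
        have het : φ (up s w) = φ w := etriv_up w h1 h2 hne
        have hle2 : Function.update (φ p) 0 true ≤ φ w := by
          rw [hupdate, ← het]; exact hm (up_mono s h1)
        by_contra hneq
        have h00 : φ w 0 = true := bool_true_le (hle2 0) (by simp)
        have hα1 : φ p 1 = false ∧ φ w 1 = true := by
          have h1le : φ p 1 ≤ φ w 1 := by
            have := hle2 1
            rwa [Function.update_of_ne (by decide)] at this
          refine bool_lt h1le (fun heq => hneq ?_)
          funext k
          rcases fin2 k with hk | hk <;> subst hk
          · rw [h00, Function.update_self]
          · rw [Function.update_of_ne (by decide), heq]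
        obtain ⟨hp1, hw1⟩ := hα1
        set z : Fin 2 → Bool := fun k => if k = 0 then false else true with hzdef
        have hz1 : φ p ≤ z := by
          intro k; rcases fin2 k with hk | hk <;> subst hk <;> simp [hzdef, hp0, hp1]
        have hz2 : z ≤ φ (up s w) := by
          rw [het]; intro k
          rcases fin2 k with hk | hk <;> subst hk <;> simp [hzdef, h00, hw1]
        obtain ⟨u, hu1, hu2, huz⟩ := hK p (up s w) (h1.trans (le_up s w)) z hz1 hz2
        cases hus : u s
        · have huw : u ≤ w := le_of_between_false hu2 hus
          by_cases hup : u = p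
          · subst hup
            have : φ u 1 = true := by rw [huz]; simp [hzdef]
            rw [this] at hp1; exact absurd hp1 (by decide)
          by_cases huw' : u = w
          · subst huw'
            have : φ u 0 = false := by rw [huz]; simp [hzdef]
            rw [this] at h00; exact absurd h00 (by decide)
          · have hres := IHk u hu1 (huw.trans h2)
              (by have := ds_lt_up hu1 huw huw'; omega) hup
            have : φ u 0 = false := by rw [huz]; simp [hzdef]
            rw [hres, Function.update_self] at this
            exact absurd this (by decide)
        · have hup : up s p ≤ u := up_le_of_between_true hu1 hus
          have := (hm hup) 0
          rw [huz, hup0] at this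
          simp only [hzdef, if_pos rfl] at this
          exact absurd this (by decide)
    -- apply the up chain to b
    have hbp : b ≠ p := fun h => hqp (h ▸ hqb)
    have hbval : φ b = Function.update (φ p) 0 true :=
      upchain (ds p b) b hpb le_rfl le_rfl hbp
    have hbup : φ (up s b) = Function.update (φ p) 0 true :=
      (etriv_up b hpb le_rfl hbp).trans hbval
    have hα1true : φ p 1 = true := by
      have h := (hm (up_mono s hqb)) 1
      rw [hbup, huq1, Function.update_of_ne (by decide)] at h
      exact bool_true_le h rfl
    -- the down side
    set a : Fin M → Bool := fun t => p t && q t with hadef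
    have hap : a ≤ p := fun t => by cases hh : p t <;> simp [hadef, hh]
    have haq : a ≤ q := fun t => by cases hh : q t <;> simp [hadef, hh]
    have etriv_down : ∀ w, a ≤ w → w ≤ p → w ≠ p → φ (up s w) = φ w := by
      intro w h1 h2 h3
      have hwsf : w s = false := bool_le_false (h2 s) hp
      by_contra hne
      obtain ⟨k, hk⟩ := Function.ne_iff.1 hne
      rcases fin2 k with hk0 | hk0 <;> subst hk0
      · have hE0w : φ w 0 ≠ φ (up s w) 0 := fun h => hk h.symm
        have hlt : ds w q < ds p q := ds_lt_main_down h2 (fun t => h1 t) h3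
        exact IH w q (by omega) hwsf hq hE0w hE1
      · exact L3 φ hm hK s 1 0 (by decide) w p h2 hwsf hp (fun h => hk h.symm) hE0
    have downchain : ∀ nn : ℕ, ∀ w, a ≤ w → w ≤ p → ds w p ≤ nn → w ≠ p →
        φ w = φ p := by
      intro nn
      induction nn with
      | zero =>
        intro w h1 h2 hds hne
        exact absurd (ds_eq_zero (Nat.le_zero.1 hds)) hne
      | succ kk IHk =>
        intro w h1 h2 hds hne
        have hwsf : w s = false := bool_le_false (h2 s) hp
        have het : φ (up s w) = φ w := etriv_down w h1 h2 hne
        have hle2 : φ w ≤ φ p := hm h2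
        by_contra hneq
        have h00 : φ w 0 = false := bool_le_false (hle2 0) hp0
        have hw1 : φ w 1 = false := by
          refine (bool_lt (hle2 1) (fun heq => hneq ?_)).1
          funext k
          rcases fin2 k with hk | hk <;> subst hk
          · rw [h00, hp0]
          · exact heq
        set z : Fin 2 → Bool := fun k => if k = 0 then true else false with hzdef
        have hz1 : φ w ≤ z := by
          intro k; rcases fin2 k with hk | hk <;> subst hk <;> simp [hzdef, h00, hw1]
        have hz2 : z ≤ φ (up s p) := by
          intro k
          rcases fin2 k with hk | hk <;> subst hk <;> simp [hzdef, hup0]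
        obtain ⟨u, hu1, hu2, huz⟩ := hK w (up s p) (h2.trans (le_up s p)) z hz1 hz2
        cases hus : u s
        · have hup : u ≤ p := le_of_between_false hu2 hus
          have := (hm hup) 0
          rw [huz, hp0] at this
          simp only [hzdef, if_pos rfl] at this
          exact absurd this (by decide)
        · set u₀ : Fin M → Bool := Function.update u s false with hu₀def
          have hu₀1 : w ≤ u₀ := by
            intro t
            by_cases ht : t = s
            · subst ht; rw [hwsf]; simp [hu₀def]
            · rw [hu₀def, Function.update_of_ne ht]; exact hu1 t
          have hu₀2 : u₀ ≤ p := by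
            intro t
            by_cases ht : t = s
            · subst ht; simp [hu₀def]
            · rw [hu₀def, Function.update_of_ne ht]
              have := hu2 t
              rwa [up_apply_ne s p ht] at this
          have huu : u = up s u₀ := by
            funext t
            by_cases ht : t = s
            · subst ht; rw [hus, up_apply_self]
            · rw [up_apply_ne s u₀ ht, hu₀def, Function.update_of_ne ht]
          by_cases h₀p : u₀ = p
          · rw [huu, h₀p] at huz
            have := congrFun huz 1
            rw [hL2p, hα1true] at this
            simp [hzdef] at this
          by_cases h₀w : u₀ = w
          · rw [huu, h₀w, het] at huz
            have := congrFun huz 0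
            rw [h00] at this
            simp [hzdef] at this
          · have hres : φ u₀ = φ p := IHk u₀ (h1.trans hu₀1) hu₀2
              (by have := ds_lt_down hu₀1 hu₀2 h₀w; omega) h₀p
            have het₀ : φ (up s u₀) = φ u₀ := etriv_down u₀ (h1.trans hu₀1) hu₀2 h₀p
            rw [huu, het₀, hres] at huz
            have := congrFun huz 0
            rw [hp0] at this
            simp [hzdef] at this
    -- apply the down chain to a
    have hanep : a ≠ p := by
      intro h
      apply hpq
      intro t
      have ht : (p t && q t) = p t := congrFun h t
      cases hh : p t
      · exact Bool.false_le _
      · rw [hh] at ht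
        simp only [Bool.true_and] at ht
        simp [ht]
    have haval : φ a = φ p := downchain (ds a p) a le_rfl hap le_rfl hanep
    have : φ p 1 ≤ φ q 1 := by
      have := (hm haq) 1
      rwa [haval] at this
    rw [hα1true, hq1] at this
    exact absurd this (by decide)

end Core

theorem disjoint_deps {m n : ℕ} (φ : (Fin m → Bool) → (Fin n → Bool)) (hm : Monotone φ)
    (hIP : IsIntervalPreserving φ) (i j : Fin n) (hij : i ≠ j) (s : Fin m) :
    ¬(BoolDependsOn φ i s ∧ BoolDependsOn φ j s) := by
  rintro ⟨⟨x, y, hxy, hne⟩, ⟨x', y', hxy', hne'⟩⟩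
  have hKφ := K_of_IP φ hIP
  set ψ : (Fin m → Bool) → (Fin 2 → Bool) := fun v k => φ v (if k = 0 then i else j) with hψ
  have hψ0 : ∀ v, ψ v 0 = φ v i := fun v => by simp [hψ]
  have hψ1 : ∀ v, ψ v 1 = φ v j := fun v => by
    rw [hψ]; simp only []; rw [if_neg (by decide)]
  have hψm : Monotone ψ := fun a b hab k => hm hab _
  have hKψ : ∀ p q : Fin m → Bool, p ≤ q → ∀ z, ψ p ≤ z → z ≤ ψ q →
      ∃ w, p ≤ w ∧ w ≤ q ∧ ψ w = z := by
    intro p q hpq z h1 h2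
    have hji : ¬ j = i := fun h => hij h.symm
    set Z : Fin n → Bool := fun k => if k = i then z 0 else if k = j then z 1 else φ p k
      with hZ
    have hZ1 : φ p ≤ Z := by
      intro k
      by_cases hk : k = i
      · subst hk
        have := h1 0; rw [hψ0] at this; simpa [hZ] using this
      · by_cases hk' : k = j
        · subst hk'
          have := h1 1; rw [hψ1] at this; simpa [hZ, hk] using this
        · simp [hZ, hk, hk']
    have hZ2 : Z ≤ φ q := by
      intro k
      by_cases hk : k = i
      · subst hk
        have := h2 0; rw [hψ0] at this; simpa [hZ] using this
      · by_cases hk' : k = j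
        · subst hk'
          have := h2 1; rw [hψ1] at this; simpa [hZ, hk] using this
        · simp only [hZ, if_neg hk, if_neg hk']
          exact hm hpq k
    obtain ⟨w, hw1, hw2, hwZ⟩ := hKφ p q hpq Z hZ1 hZ2
    refine ⟨w, hw1, hw2, ?_⟩
    funext k
    rcases fin2 k with hk | hk <;> subst hk
    · rw [hψ0, hwZ]; simp [hZ]
    · rw [hψ1, hwZ]; simp [hZ, hji]
  have norm : ∀ (x y : Fin m → Bool) (k : Fin 2), (∀ t, t ≠ s → x t = y t) →
      ψ x k ≠ ψ y k → ∃ p, p s = false ∧ ψ p k ≠ ψ (up s p) k := by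
    intro x y k hagree hne2
    have hxys : x s ≠ y s := by
      intro h
      apply hne2
      have : x = y := by
        funext t
        by_cases ht : t = s
        · rw [ht]; exact h
        · exact hagree t ht
      rw [this]
    cases hxs : x s
    · refine ⟨x, hxs, ?_⟩
      have hupx : up s x = y := by
        funext t
        by_cases ht : t = s
        · rw [ht, up_apply_self]
          rw [hxs] at hxys
          cases hys : y s <;> simp_all
        · rw [up_apply_ne s x ht]; exact hagree t ht
      rw [hupx]; exact hne2
    · have hys : y s = false := by
        rw [hxs] at hxys
        cases hys : y s <;> simp_all
      refine ⟨y, hys, ?_⟩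
      have hupy : up s y = x := by
        funext t
        by_cases ht : t = s
        · rw [ht, up_apply_self, hxs]
        · rw [up_apply_ne s y ht]; exact (hagree t ht).symm
      rw [hupy]; exact fun h => hne2 h.symm
  obtain ⟨p, hps, hp⟩ := norm x y 0 hxy (by rw [hψ0, hψ0]; exact hne)
  obtain ⟨q, hqs, hq⟩ := norm x' y' 1 hxy' (by rw [hψ1, hψ1]; exact hne')
  exact core ψ hψm hKψ s (ds p q) p q le_rfl hps hqs hp hq

/-- A component's value only depends on the coordinates it depends on. -/
lemma agree_on {m n : ℕ} (φ : (Fin m → Bool) → (Fin n → Bool)) (i : Fin n) :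
    ∀ (k : ℕ) (y y' : Fin m → Bool), ds y y' ≤ k →
      (∀ t, y t ≠ y' t → ¬ BoolDependsOn φ i t) → φ y i = φ y' i := by
  intro k
  induction k with
  | zero =>
    intro y y' hc _
    rw [ds_eq_zero (Nat.le_zero.1 hc)]
  | succ k IHk =>
    intro y y' hc hdep
    by_cases hyy : y = y'
    · rw [hyy]
    obtain ⟨t₀, ht₀⟩ := Function.ne_iff.1 hyy
    set y'' : Fin m → Bool := Function.update y t₀ (y' t₀) with hy''
    have step1 : φ y i = φ y'' i := by
      by_contra hne
      exact hdep t₀ ht₀ ⟨y, y'', fun t ht => (Function.update_of_ne ht _ _).symm, hne⟩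
    have hsub : (Finset.univ.filter fun t => y'' t ≠ y' t) ⊆
        (Finset.univ.filter fun t => y t ≠ y' t).erase t₀ := by
      intro t ht
      have ht' := mem_ds.1 ht
      have htne : t ≠ t₀ := by
        intro h; subst h
        exact ht' (by rw [hy'']; exact Function.update_self _ _ _)
      rw [hy'', Function.update_of_ne htne] at ht'
      exact Finset.mem_erase.2 ⟨htne, mem_ds.2 ht'⟩
    have hds2 : ds y'' y' ≤ k := by
      have hcard := Finset.card_le_card hsub
      have ht₀mem : t₀ ∈ (Finset.univ.filter fun t => y t ≠ y' t) := mem_ds.2 ht₀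
      have herase := Finset.card_erase_of_mem ht₀mem
      have hpos : 0 < (Finset.univ.filter fun t => y t ≠ y' t).card :=
        Finset.card_pos.2 ⟨t₀, ht₀mem⟩
      unfold ds at hc ⊢
      omega
    have step2 : φ y'' i = φ y' i := by
      apply IHk y'' y' hds2
      intro t ht
      have htne : t ≠ t₀ := by
        intro h; subst h
        exact ht (by rw [hy'']; exact Function.update_self _ _ _)
      rw [hy'', Function.update_of_ne htne] at ht
      exact hdep t ht
    exact step1.trans step2


theorem decompose (m : ℕ) (φ : (Fin (m + 2) → Bool) → (Fin 2 → Bool)) (hm : Monotone φ)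
    (hsurj : Function.Surjective φ) (hIP : IsIntervalPreserving φ) :
    ∃ (m₁ m₂ : ℕ) (h : m₁ + m₂ = m + 2) (g : Equiv.Perm (Fin (m + 2)))
      (φ₁ : (Fin m₁ → Bool) → Bool) (φ₂ : (Fin m₂ → Bool) → Bool),
      Monotone φ₁ ∧ Function.Surjective φ₁ ∧ Monotone φ₂ ∧ Function.Surjective φ₂ ∧
      ∀ x : Fin (m + 2) → Bool,
        φ (x ∘ g) 0 = φ₁ (fun j => x (Fin.cast h (Fin.castAdd m₂ j))) ∧
        φ (x ∘ g) 1 = φ₂ (fun j => x (Fin.cast h (Fin.natAdd m₁ j))) := by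
  classical
  set T : Finset (Fin (m + 2)) := Finset.univ.filter fun s => BoolDependsOn φ 0 s with hT
  have hsum : T.card + Tᶜ.card = m + 2 := by
    rw [Finset.card_add_card_compl, Fintype.card_fin]
  set e₁ := T.orderIsoOfFin (rfl : T.card = T.card) with he₁
  set e₂ := Tᶜ.orderIsoOfFin (rfl : Tᶜ.card = Tᶜ.card) with he₂
  set E : (Fin T.card ⊕ Fin Tᶜ.card) ≃ Fin (m + 2) :=
    (Equiv.sumCongr e₁.toEquiv (e₂.toEquiv.trans
      (Equiv.subtypeEquivRight fun a => Finset.mem_compl))).trans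
      (Equiv.sumCompl (· ∈ T)) with hE
  set g : Equiv.Perm (Fin (m + 2)) :=
    E.symm.trans (finSumFinEquiv.trans (finCongr hsum)) with hg
  have hEinl : ∀ jj : Fin T.card, (E (Sum.inl jj)) ∈ T := by
    intro jj
    simp only [hE, Equiv.trans_apply, Equiv.sumCongr_apply, Sum.map_inl,
      Equiv.sumCompl_apply_inl]
    exact (e₁ jj).2
  have hEinr : ∀ kk : Fin Tᶜ.card, (E (Sum.inr kk)) ∉ T := by
    intro kk
    simp only [hE, Equiv.trans_apply, Equiv.sumCongr_apply, Sum.map_inr,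
      Equiv.sumCompl_apply_inr]
    exact ((Equiv.subtypeEquivRight fun a => Finset.mem_compl) (e₂ kk)).2
  have hgE : ∀ σ, g (E σ) = Fin.cast hsum (finSumFinEquiv σ) := by
    intro σ
    simp [hg]
  have hdep0 : ∀ t, BoolDependsOn φ 0 t → t ∈ T := by
    intro t hdep; rw [hT]; simp [hdep]
  have hdep1 : ∀ t, BoolDependsOn φ 1 t → t ∉ T := by
    intro t hdep ht
    rw [hT] at ht
    simp only [Finset.mem_filter, Finset.mem_univ, true_and] at ht
    exact disjoint_deps φ hm hIP 0 1 (by decide) t ⟨ht, hdep⟩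
  have hagree : ∀ (i : Fin 2) (y y' : Fin (m + 2) → Bool),
      (∀ t, BoolDependsOn φ i t → y t = y' t) → φ y i = φ y' i := by
    intro i y y' hyy
    exact agree_on φ i (ds y y') y y' le_rfl (fun t ht hdep => ht (hyy t hdep))
  set φ₁ : (Fin T.card → Bool) → Bool :=
    fun v => φ (fun t => Sum.elim v (fun _ => false) (E.symm t)) 0 with hφ₁
  set φ₂ : (Fin Tᶜ.card → Bool) → Bool :=
    fun w => φ (fun t => Sum.elim (fun _ => false) w (E.symm t)) 1 with hφ₂
  refine ⟨T.card, Tᶜ.card, hsum, g, φ₁, φ₂, ?_, ?_, ?_, ?_, ?_⟩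
  · -- Monotone φ₁
    intro v v' hv
    apply (hm (fun t => ?_) : _ ≤ _) 0
    rcases hσ : E.symm t with jj | kk <;> simp only [hσ, Sum.elim_inl, Sum.elim_inr]
    · exact hv jj
    · exact le_refl _
  · -- Surjective φ₁
    intro c
    obtain ⟨y, hy⟩ := hsurj (fun _ => c)
    refine ⟨fun jj => y (E (Sum.inl jj)), ?_⟩
    have := hagree 0 (fun t => Sum.elim (fun jj => y (E (Sum.inl jj)))
        (fun _ => false) (E.symm t)) y ?_
    · rw [hφ₁]
      simp only []
      rw [this, hy]
    · intro t hdep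
      rcases hσ : E.symm t with jj | kk
      · simp only [hσ, Sum.elim_inl]
        rw [← hσ, Equiv.apply_symm_apply]
      · exact absurd (((Equiv.symm_apply_eq E).1 hσ) ▸ hEinr kk) (by
          intro hcon; exact hcon (hdep0 t hdep))
  · -- Monotone φ₂
    intro w w' hw
    apply (hm (fun t => ?_) : _ ≤ _) 1
    rcases hσ : E.symm t with jj | kk <;> simp only [hσ, Sum.elim_inl, Sum.elim_inr]
    · exact le_refl _
    · exact hw kk
  · -- Surjective φ₂
    intro c
    obtain ⟨y, hy⟩ := hsurj (fun _ => c)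
    refine ⟨fun kk => y (E (Sum.inr kk)), ?_⟩
    have := hagree 1 (fun t => Sum.elim (fun _ => false)
        (fun kk => y (E (Sum.inr kk))) (E.symm t)) y ?_
    · rw [hφ₂]
      simp only []
      rw [this, hy]
    · intro t hdep
      rcases hσ : E.symm t with jj | kk
      · exact absurd (((Equiv.symm_apply_eq E).1 hσ) ▸ hEinl jj)
          (fun hcon => (hdep1 t hdep) hcon)
      · simp only [hσ, Sum.elim_inr]
        rw [← hσ, Equiv.apply_symm_apply]
  · -- the product equations
    intro x
    constructor
    · apply hagree 0
      intro t hdep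
      have htT : t ∈ T := hdep0 t hdep
      rcases hσ : E.symm t with jj | kk
      · have ht : t = E (Sum.inl jj) := (Equiv.symm_apply_eq E).1 hσ
        simp only [hσ, Sum.elim_inl, Function.comp_apply]
        rw [ht, hgE, finSumFinEquiv_apply_left]
      · exact absurd (((Equiv.symm_apply_eq E).1 hσ) ▸ hEinr kk)
          (fun hcon => hcon htT)
    · apply hagree 1
      intro t hdep
      have htT : t ∉ T := hdep1 t hdep
      rcases hσ : E.symm t with jj | kk
      · exact absurd (((Equiv.symm_apply_eq E).1 hσ) ▸ hEinl jj)
          (fun hcon => htT hcon)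
      · have ht : t = E (Sum.inr kk) := (Equiv.symm_apply_eq E).1 hσ
        simp only [hσ, Sum.elim_inr, Function.comp_apply]
        rw [ht, hgE, finSumFinEquiv_apply_right]

end Stmt18

/-- A surjective interval-preserving monotone `φ : [1]^{m+2} → [1]²`
decomposes, after a coordinate permutation of the domain, as a product `φ₁ × φ₂` of two
surjective monotone maps; in particular, for any surjective interval-preserving monotone
`φ : [1]^m → [1]^n` and distinct output coordinates `i ≠ j`, the sets of input
coordinates on which the `i`-th and `j`-th components depend are disjoint. -/
theorem stmt_18 :
    (∀ (m : ℕ) (φ : (Fin (m + 2) → Bool) → (Fin 2 → Bool)), Monotone φ →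
      Function.Surjective φ → IsIntervalPreserving φ →
      ∃ (m₁ m₂ : ℕ) (h : m₁ + m₂ = m + 2) (g : Equiv.Perm (Fin (m + 2)))
        (φ₁ : (Fin m₁ → Bool) → Bool) (φ₂ : (Fin m₂ → Bool) → Bool),
        Monotone φ₁ ∧ Function.Surjective φ₁ ∧ Monotone φ₂ ∧ Function.Surjective φ₂ ∧
        ∀ x : Fin (m + 2) → Bool,
          φ (x ∘ g) 0 = φ₁ (fun j => x (Fin.cast h (Fin.castAdd m₂ j))) ∧
          φ (x ∘ g) 1 = φ₂ (fun j => x (Fin.cast h (Fin.natAdd m₁ j)))) ∧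
    (∀ (m n : ℕ) (φ : (Fin m → Bool) → (Fin n → Bool)), Monotone φ →
      Function.Surjective φ → IsIntervalPreserving φ →
      ∀ i j : Fin n, i ≠ j → ∀ s : Fin m, ¬ (BoolDependsOn φ i s ∧ BoolDependsOn φ j s)) := by
  constructor
  · intro m φ hm hs hIP
    exact Stmt18.decompose m φ hm hs hIP
  · intro m n φ hm _ hIP i j hij s
    exact Stmt18.disjoint_deps φ hm hIP i j hij s
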